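/- Let f : ℤ₂^N → ℤ₂ be the affine function f(x) = x_g for some fixed index g, and suppose g does not appear in the functions f₂,...,fₙ (i.e. the coefficient of x_g in each f_j, j ≥ 2, is zero) nor in φ except possibly a term p·x_g. Then the n-qubit state (1/√(2^N)) ∑_x (-1)^{φ(x)} |f(x)⟩⊗|f₂(x)⟩⊗⋯⊗|fₙ(x)⟩ factorizes as |(−)^p⟩ ⊗ ψ, where |(−)^0⟩ = |+⟩ = (|0⟩+|1⟩)/√2, |(−)^1⟩ = |−⟩ = (|0⟩−|1⟩)/√2, and ψ = (1/√(2^{N−1})) ∑_{x'} (−1)^{φ'(x')} |f₂(x')⟩⊗⋯⊗|fₙ(x')⟩ with x' ranging over assignments to the remaining N−1 indeterminates and φ' obtained from φ by deleting the x_g term. -/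

import Mathlib

open TensorProduct

/-- The standard basis vector `|x⟩` of a qubit. -/
noncomputable def ket (x : ZMod 2) : ZMod 2 → ℂ := Pi.single x 1

/-- The standard basis vector of an `m`-qubit register, indexed by a bit string. -/
noncomputable def kets (m : ℕ) (v : Fin m → ZMod 2) : (Fin m → ZMod 2) → ℂ := Pi.single v 1

/-- Suppose the first qubit carries the formula `f₁(x) = x_g`, the remaining
qubit formulas `f j` (with coefficients `c j`) do not involve `x_g`, and the phase
`φ(x) = p₀ + ∑ p_i x_i` involves `x_g` only through the term `p_g · x_g`.  Then the state
`(1/√(2^N)) ∑_x (-1)^(φ x) |x_g⟩ ⊗ |f₂ x⟩⋯|fₙ x⟩` factorizes as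
`|(−)^{p_g}⟩ ⊗ ψ`, where `|(−)^p⟩ = (1/√2) ∑_y (-1)^{p·y} |y⟩` and `ψ` is the
`(N−1)`-indeterminate state obtained by restricting to assignments with `x_g = 0`
(i.e. deleting the `x_g` term of `φ`). -/
theorem stmt7 (N m : ℕ) (g : Fin N)
    (f : Fin m → (Fin N → ZMod 2) → ZMod 2)
    (c₀ : Fin m → ZMod 2) (c : Fin m → Fin N → ZMod 2)
    (hf : ∀ j x, f j x = c₀ j + ∑ i, c j i * x i)
    (hcg : ∀ j, c j g = 0)
    (φ : (Fin N → ZMod 2) → ZMod 2) (p₀ : ZMod 2) (p : Fin N → ZMod 2)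
    (hφ : ∀ x, φ x = p₀ + ∑ i, p i * x i) :
    ((1 / Real.sqrt (2 ^ N) : ℝ) : ℂ) •
        ∑ x : Fin N → ZMod 2, ((-1 : ℂ) ^ (φ x).val) •
          (ket (x g) ⊗ₜ[ℂ] kets m (fun j => f j x))
      = (((1 / Real.sqrt 2 : ℝ) : ℂ) •
          ∑ y : ZMod 2, ((-1 : ℂ) ^ (p g * y).val) • ket y) ⊗ₜ[ℂ]
        (((1 / Real.sqrt (2 ^ (N - 1)) : ℝ) : ℂ) •
          ∑ x ∈ Finset.univ.filter (fun x : Fin N → ZMod 2 => x g = 0),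
            ((-1 : ℂ) ^ (φ x).val) • kets m (fun j => f j x)) := by
  classical
  have hN : 0 < N := g.pos
  have hsign : ∀ a b : ZMod 2, ((-1:ℂ)) ^ (a+b).val = (-1)^a.val * (-1)^b.val := by
    intro a b; rw [← pow_add, ZMod.val_add, ← Nat.mod_add_div (a.val + b.val) 2, pow_add, pow_mul]; simp
  -- phase decomposition
  have hφ' : ∀ x : Fin N → ZMod 2, φ x = p g * x g + φ (Function.update x g 0) := by
    intro x
    rw [hφ, hφ]
    have h1 : ∑ i, p i * Function.update x g 0 i
        = ∑ i ∈ Finset.univ.erase g, p i * x i := by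
      rw [← Finset.add_sum_erase Finset.univ (fun i => p i * Function.update x g 0 i)
        (Finset.mem_univ g)]
      simp only [Function.update_self, mul_zero, zero_add]
      refine Finset.sum_congr rfl fun i hi => ?_
      rw [Function.update_of_ne (Finset.ne_of_mem_erase hi)]
    rw [h1, ← Finset.add_sum_erase Finset.univ (fun i => p i * x i) (Finset.mem_univ g)]
    ring
  have hf' : ∀ j (x : Fin N → ZMod 2), f j x = f j (Function.update x g 0) := by
    intro j x
    rw [hf, hf]
    congr 1
    refine Finset.sum_congr rfl fun i _ => ?_
    by_cases hig : i = g
    · subst hig; rw [hcg]; ring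
    · rw [Function.update_of_ne hig]
  -- sum decomposition
  have hsplit : (∑ x : Fin N → ZMod 2, ((-1 : ℂ) ^ (φ x).val) •
          (ket (x g) ⊗ₜ[ℂ] kets m (fun j => f j x)))
      = ∑ y : ZMod 2, ∑ x ∈ Finset.univ.filter (fun x : Fin N → ZMod 2 => x g = 0),
          (((-1 : ℂ) ^ (p g * y).val * (-1 : ℂ) ^ (φ x).val)) •
            (ket y ⊗ₜ[ℂ] kets m (fun j => f j x)) := by
    rw [← Finset.sum_product']
    refine Finset.sum_nbij' (fun x => (x g, Function.update x g 0))
      (fun yx => Function.update yx.2 g yx.1) ?_ ?_ ?_ ?_ ?_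
    · intro x _
      simp [Finset.mem_product]
    · intro yx _
      simp
    · intro x _
      simp [Function.update_idem, Function.update_eq_self]
    · intro yx hyx
      simp only [Finset.mem_product, Finset.mem_univ, Finset.mem_filter, true_and] at hyx
      refine Prod.ext ?_ ?_
      · simp
      · show Function.update (Function.update yx.2 g yx.1) g 0 = yx.2
        rw [Function.update_idem]
        rw [show (0 : ZMod 2) = yx.2 g from hyx.symm, Function.update_eq_self]
    · intro x _
      have hg0 : Function.update x g 0 g = (0 : ZMod 2) := by simp
      rw [hφ' x, hsign]
      have : (fun j => f j x) = fun j => f j (Function.update x g 0) := by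
        funext j; exact hf' j x
      rw [this]
  rw [hsplit]
  -- scalars
  have hNsplit : (2:ℝ) ^ N = 2 * 2 ^ (N - 1) := by
    rw [← pow_succ']
    congr 1
    omega
  have hscal : ((1 / Real.sqrt (2 ^ N) : ℝ) : ℂ)
      = ((1 / Real.sqrt 2 : ℝ) : ℂ) * ((1 / Real.sqrt (2 ^ (N - 1)) : ℝ) : ℂ) := by
    rw [← Complex.ofReal_mul]
    congr 1
    rw [hNsplit, Real.sqrt_mul (by norm_num)]
    rw [one_div, one_div, one_div, mul_inv]
  rw [TensorProduct.smul_tmul_smul, hscal]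
  congr 1
  rw [TensorProduct.sum_tmul]
  refine Finset.sum_congr rfl fun y _ => ?_
  rw [TensorProduct.tmul_sum]
  refine Finset.sum_congr rfl fun x _ => ?_
  rw [TensorProduct.smul_tmul_smul]
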